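/- Let G be a finite group and x, y ∈ G be two elements of the power graph of G. If x and y are open twins (N(x) = N(y)) and x ≠ y, then x and y are involutions and N(x) = N(y) = {1}. -/
import Mathlib


/-- The power graph of a group: distinct `x, y` are adjacent iff one is a
positive power of the other. -/
def powerGraph (G : Type*) [Group G] : SimpleGraph G :=
  SimpleGraph.fromRel (fun x y => ∃ m : ℕ, 0 < m ∧ x = y ^ m)

/-- The closed neighbourhood of a vertex in the power graph. -/
def closedNbhd {G : Type*} [Group G] (x : G) : Set G :=
  insert x ((powerGraph G).neighborSet x)

lemma pg_adj {G : Type*} [Group G] {a b : G} :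
    (powerGraph G).Adj a b ↔ a ≠ b ∧
      ((∃ m : ℕ, 0 < m ∧ a = b ^ m) ∨ (∃ m : ℕ, 0 < m ∧ b = a ^ m)) := by
  simp [powerGraph, SimpleGraph.fromRel_adj]

lemma invol_pow {G : Type*} [Group G] {x : G} (h : x ^ 2 = 1) (m : ℕ) :
    x ^ m = 1 ∨ x ^ m = x := by
  rcases Nat.even_or_odd m with ⟨r, rfl⟩ | ⟨s, rfl⟩
  · left; rw [← two_mul, pow_mul, h, one_pow]
  · right; rw [pow_add, pow_mul, h, one_pow, pow_one, one_mul]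

/-- In the cyclic group generated by `a`, there is at most one involution. -/
lemma pow_invol_eq {G : Type*} [Group G] [Finite G] (a : G) {m k : ℕ}
    (hm : orderOf (a ^ m) = 2) (hk : orderOf (a ^ k) = 2) : a ^ m = a ^ k := by
  have npos : 0 < orderOf a := orderOf_pos a
  have key : ∀ j : ℕ, orderOf (a ^ j) = 2 →
      a ^ j = a ^ (Nat.gcd (orderOf a) j) ∧
      orderOf a = Nat.gcd (orderOf a) j * 2 := by
    intro j hj
    have hg : orderOf a / Nat.gcd (orderOf a) j = 2 := by
      rw [← orderOf_pow, hj]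
    have hdvd : Nat.gcd (orderOf a) j ∣ orderOf a := Nat.gcd_dvd_left _ _
    have hn : orderOf a = Nat.gcd (orderOf a) j * 2 := by
      rw [← hg, Nat.mul_div_cancel' hdvd]
    have hb2 : (a ^ Nat.gcd (orderOf a) j) ^ 2 = 1 := by
      rw [← pow_mul, ← hn, pow_orderOf_eq_one]
    obtain ⟨t, ht⟩ : Nat.gcd (orderOf a) j ∣ j := Nat.gcd_dvd_right _ _
    have hx : a ^ j = (a ^ Nat.gcd (orderOf a) j) ^ t := by
      rw [← pow_mul, ← ht]
    rcases invol_pow hb2 t with h1 | h1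
    · exfalso
      rw [hx, h1] at hj
      simp at hj
    · exact ⟨by rw [hx, h1], hn⟩
  obtain ⟨hxm, hnm⟩ := key m hm
  obtain ⟨hxk, hnk⟩ := key k hk
  have : Nat.gcd (orderOf a) m = Nat.gcd (orderOf a) k :=
    Nat.eq_of_mul_eq_mul_right (by norm_num) (hnm.symm.trans hnk)
  rw [hxm, hxk, this]

lemma adj_one {G : Type*} [Group G] [Finite G] {z : G} (hz : z ≠ 1) :
    (powerGraph G).Adj z 1 := by
  rw [pg_adj]
  exact ⟨hz, Or.inr ⟨orderOf z, orderOf_pos z, (pow_orderOf_eq_one z).symm⟩⟩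

lemma twins_ne_one {G : Type*} [Group G] [Finite G] {x y : G} (hxy : x ≠ y)
    (h : (powerGraph G).neighborSet x = (powerGraph G).neighborSet y) :
    x ≠ 1 := by
  intro hx1
  -- then y is adjacent to x = 1, so y ∈ N(x) = N(y), contradiction
  have hy1 : y ≠ 1 := fun hy1 => hxy (hx1.trans hy1.symm)
  have hadj : (powerGraph G).Adj x y := by
    rw [hx1]; exact ((adj_one hy1).symm)
  have : y ∈ (powerGraph G).neighborSet y := by
    rw [← h]; exact hadj
  exact (powerGraph G).irrefl this

lemma twins_order_two {G : Type*} [Group G] [Finite G] {x y : G} (hxy : x ≠ y)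
    (h : (powerGraph G).neighborSet x = (powerGraph G).neighborSet y) :
    orderOf x = 2 := by
  have hx1 : x ≠ 1 := twins_ne_one hxy h
  have hy1 : y ≠ 1 := twins_ne_one hxy.symm h.symm
  have hnadj : ¬ (powerGraph G).Adj x y := by
    intro hadj
    have : x ∈ (powerGraph G).neighborSet x := by rw [h]; exact hadj.symm
    exact (powerGraph G).irrefl this
  set n := orderOf x with hn
  have npos : 0 < n := orderOf_pos x
  have hne1 : n ≠ 1 := fun h1 => hx1 (orderOf_eq_one_iff.mp h1)
  by_contra hne2
  have hn3 : 3 ≤ n := by omega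
  -- x⁻¹ is a neighbour of x
  have hinv : x⁻¹ = x ^ (n - 1) := by
    apply inv_eq_of_mul_eq_one_right
    rw [← pow_succ', Nat.sub_add_cancel (by omega), hn, pow_orderOf_eq_one]
  have hxinv : x ≠ x⁻¹ := by
    intro he
    have hsq : x ^ 2 = 1 := by
      rw [pow_two]; nth_rewrite 2 [he]; exact mul_inv_cancel x
    have hd := orderOf_dvd_of_pow_eq_one hsq
    rw [← hn] at hd
    have := Nat.le_of_dvd (by norm_num) hd
    omega
  have hmem : x⁻¹ ∈ (powerGraph G).neighborSet x := by
    rw [SimpleGraph.mem_neighborSet, pg_adj]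
    exact ⟨hxinv, Or.inr ⟨n - 1, by omega, hinv⟩⟩
  rw [h, SimpleGraph.mem_neighborSet, pg_adj] at hmem
  obtain ⟨-, hrel⟩ := hmem
  apply hnadj
  rw [pg_adj]
  refine ⟨hxy, ?_⟩
  rcases hrel with ⟨m, hm, hym⟩ | ⟨m, hm, hym⟩
  · -- y = (x⁻¹)^m = x^((n-1)*m)
    right
    refine ⟨(n - 1) * m, Nat.mul_pos (by omega) hm, ?_⟩
    rw [hym, hinv, ← pow_mul]
  · -- x⁻¹ = y^m, so x = (y⁻¹)^m = y^((ord y - 1) * m)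
    left
    have oy : 0 < orderOf y := orderOf_pos y
    have oy2 : 2 ≤ orderOf y := by
      rcases Nat.lt_or_ge (orderOf y) 2 with h2 | h2
      · exfalso; apply hy1; apply orderOf_eq_one_iff.mp; omega
      · exact h2
    have hyi : y⁻¹ = y ^ (orderOf y - 1) := by
      apply inv_eq_of_mul_eq_one_right
      rw [← pow_succ', Nat.sub_add_cancel (by omega), pow_orderOf_eq_one]
    refine ⟨(orderOf y - 1) * m, Nat.mul_pos (by omega) hm, ?_⟩
    have : x = (y ^ m)⁻¹ := by rw [← hym, inv_inv]
    rw [this, ← inv_pow, hyi, ← pow_mul]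

lemma twins_nbhd_eq_one {G : Type*} [Group G] [Finite G] {x y : G} (hxy : x ≠ y)
    (h : (powerGraph G).neighborSet x = (powerGraph G).neighborSet y) :
    (powerGraph G).neighborSet x = {1} := by
  have hx2 : orderOf x = 2 := twins_order_two hxy h
  have hy2 : orderOf y = 2 := twins_order_two hxy.symm h.symm
  have hx1 : x ≠ 1 := twins_ne_one hxy h
  have hxsq : x ^ 2 = 1 := by rw [← hx2, pow_orderOf_eq_one]
  have hysq : y ^ 2 = 1 := by rw [← hy2, pow_orderOf_eq_one]
  ext z
  simp only [Set.mem_singleton_iff, SimpleGraph.mem_neighborSet]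
  constructor
  · intro hadj
    have hz_in_y : z ∈ (powerGraph G).neighborSet y := by rw [← h]; exact hadj
    rw [SimpleGraph.mem_neighborSet, pg_adj] at hz_in_y
    rw [pg_adj] at hadj
    obtain ⟨hxz, hrelx⟩ := hadj
    obtain ⟨hyz, hrely⟩ := hz_in_y
    rcases hrelx with ⟨m, hm, hxm⟩ | ⟨m, hm, hxm⟩
    · -- x = z ^ m
      rcases hrely with ⟨k, hk, hyk⟩ | ⟨k, hk, hyk⟩
      · -- y = z ^ k : then x = y by uniqueness of involution, contradiction
        exfalso
        apply hxy
        have h1 : orderOf (z ^ m) = 2 := by rw [← hxm]; exact hx2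
        have h2 : orderOf (z ^ k) = 2 := by rw [← hyk]; exact hy2
        rw [hxm, hyk]
        exact pow_invol_eq z h1 h2
      · -- z = y ^ k ∈ {1, y}
        rcases invol_pow hysq k with h1 | h1
        · rw [hyk, h1]
        · exfalso; exact hyz (h1 ▸ hyk).symm
    · -- z = x ^ m ∈ {1, x}
      rcases invol_pow hxsq m with h1 | h1
      · rw [hxm, h1]
      · exfalso; exact hxz (h1 ▸ hxm).symm
  · rintro rfl
    exact adj_one hx1

theorem open_twins_are_involutions {G : Type*} [Group G] [Finite G]
    (x y : G) (hxy : x ≠ y)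
    (h : (powerGraph G).neighborSet x = (powerGraph G).neighborSet y) :
    orderOf x = 2 ∧ orderOf y = 2 ∧
      (powerGraph G).neighborSet x = {1} ∧
      (powerGraph G).neighborSet y = {1} := by
  exact ⟨twins_order_two hxy h, twins_order_two hxy.symm h.symm,
    twins_nbhd_eq_one hxy h, twins_nbhd_eq_one hxy.symm h.symm⟩
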